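/- Let a = (a1,a2) be a unit vector with a1 > a2 > 0 and let 0 ≤ t ≤ a1 - a2. Let M be an odd nonnegative integer. Then the integral over the slice {x ∈ [-1/2,1/2]^2 : ⟨a,x⟩ = t/2} of x1^M + x2^M with respect to 1-dimensional Hausdorff measure equals ((t+a2)^{M+1} - (t-a2)^{M+1}) / ((M+1) · 2^{M+1} · a1^{M+1} · a2). -/

import Mathlib

open MeasureTheory Set

theorem moment_slice_square_chamber1_odd
    (a1 a2 t : ℝ) (M : ℕ) (hM : Odd M)
    (hunit : a1 ^ 2 + a2 ^ 2 = 1) (h12 : a1 > a2) (h2 : a2 > 0)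
    (ht0 : 0 ≤ t) (ht1 : t ≤ a1 - a2) :
    ∫ x in {x : EuclideanSpace ℝ (Fin 2) |
        (∀ i, |x i| ≤ 1 / 2) ∧ a1 * x 0 + a2 * x 1 = t / 2},
        ((x 0) ^ M + (x 1) ^ M) ∂(μH[1])
      = ((t + a2) ^ (M + 1) - (t - a2) ^ (M + 1)) /
          ((M + 1) * 2 ^ (M + 1) * a1 ^ (M + 1) * a2) := by
  have h1 : (0:ℝ) < a1 := lt_trans h2 h12
  obtain ⟨e, hedef⟩ : ∃ e : ℝ, e = 1/(2*a1) := ⟨_, rfl⟩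
  have hepos : 0 < e := by rw [hedef]; positivity
  have he : 2 * a1 * e = 1 := by rw [hedef]; field_simp
  set f : ℝ → EuclideanSpace ℝ (Fin 2) :=
    fun s => (WithLp.equiv 2 (Fin 2 → ℝ)).symm ![t*e - a2*s, a1*s] with hfdef
  have hf0 : ∀ s : ℝ, f s 0 = t*e - a2*s := fun s => rfl
  have hf1 : ∀ s : ℝ, f s 1 = a1*s := fun s => rfl
  have hf : Isometry f := by
    apply Isometry.of_dist_eq
    intro x y
    rw [EuclideanSpace.dist_eq, Real.dist_eq]
    simp only [hfdef, WithLp.equiv_symm_apply, WithLp.ofLp_toLp, Fin.sum_univ_two, Matrix.cons_val_zero,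
      Matrix.cons_val_one, Matrix.head_cons, Real.dist_eq, sq_abs]
    rw [show (t*e - a2*x - (t*e - a2*y))^2 + (a1*x - a1*y)^2 = (x - y)^2 by
      linear_combination (x - y)^2 * hunit]
    exact Real.sqrt_sq_eq_abs _
  -- set equality
  have hset : {x : EuclideanSpace ℝ (Fin 2) |
      (∀ i, |x i| ≤ 1 / 2) ∧ a1 * x 0 + a2 * x 1 = t / 2} = f '' Icc (-e) e := by
    ext x
    constructor
    · rintro ⟨hb, hl⟩
      have hx1 := hb 1
      rw [abs_le] at hx1
      have p1 : 0 ≤ e * (1 + 2 * x 1) := mul_nonneg hepos.le (by linarith [hx1.1])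
      have p2 : 0 ≤ e * (1 - 2 * x 1) := mul_nonneg hepos.le (by linarith [hx1.2])
      refine ⟨2 * e * x 1, ⟨by linarith, by linarith⟩, ?_⟩
      ext i
      fin_cases i
      · show t*e - a2*(2 * e * x 1) = x 0
        linear_combination (-2*e)*hl + (x 0) * he
      · show a1 * (2 * e * x 1) = x 1
        linear_combination (x 1) * he
    · rintro ⟨s, ⟨hs1, hs2⟩, rfl⟩
      have q1 : 0 ≤ (a1 - a2) * e := mul_nonneg (by linarith) hepos.le
      have q2 : 0 ≤ t * e := mul_nonneg ht0 hepos.le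
      have q3 : 0 ≤ a2 * (e - s) := mul_nonneg h2.le (by linarith)
      have q4 : 0 ≤ a2 * (e + s) := mul_nonneg h2.le (by linarith)
      have q5 : 0 ≤ a1 * (e - s) := mul_nonneg h1.le (by linarith)
      have q6 : 0 ≤ a1 * (e + s) := mul_nonneg h1.le (by linarith)
      have q7 : 0 ≤ (a1 - a2 - t) * e := mul_nonneg (by linarith) hepos.le
      refine ⟨fun i => ?_, ?_⟩
      · fin_cases i
        · show |t*e - a2*s| ≤ 1/2
          rw [abs_le]
          constructor <;> nlinarith
        · show |a1*s| ≤ 1/2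
          rw [abs_le]
          constructor <;> nlinarith
      · show a1 * (t*e - a2*s) + a2 * (a1*s) = t / 2
        linear_combination (t/2) * he
  rw [hset]
  have hmap : Measure.map f (volume : Measure ℝ) = μH[1].restrict (Set.range f) := by
    rw [← MeasureTheory.hausdorffMeasure_real]
    exact hf.map_hausdorffMeasure (Or.inl one_pos.le)
  have himg_meas : MeasurableSet (f '' Icc (-e) e) :=
    ((isCompact_Icc.image hf.continuous).isClosed).measurableSet
  have hsub : f '' Icc (-e) e ∩ Set.range f = f '' Icc (-e) e :=
    inter_eq_left.mpr (image_subset_range f _)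
  have hme : MeasurableEmbedding f :=
    (hf.isClosedEmbedding).measurableEmbedding
  have hM1 : ((M:ℝ) + 1) ≠ 0 := by positivity
  calc ∫ x in f '' Icc (-e) e, ((x 0) ^ M + (x 1) ^ M) ∂(μH[1])
      = ∫ x in f '' Icc (-e) e, ((x 0) ^ M + (x 1) ^ M)
          ∂(μH[1].restrict (Set.range f)) := by
        rw [Measure.restrict_restrict himg_meas, hsub]
    _ = ∫ x in f '' Icc (-e) e, ((x 0) ^ M + (x 1) ^ M)
          ∂(Measure.map f (volume : Measure ℝ)) := by rw [hmap]
    _ = ∫ s in Icc (-e) e, ((f s 0) ^ M + (f s 1) ^ M) := by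
        rw [hme.setIntegral_map, preimage_image_eq _ hme.injective]
    _ = ∫ s in Icc (-e) e, ((t*e - a2*s) ^ M + (a1*s) ^ M) := by
        simp only [hf0, hf1]
    _ = ∫ s in (-e)..e, ((t*e - a2*s) ^ M + (a1*s) ^ M) := by
        rw [intervalIntegral.integral_of_le (by linarith), integral_Icc_eq_integral_Ioc]
    _ = (∫ s in (-e)..e, (t*e - a2*s) ^ M) + ∫ s in (-e)..e, (a1*s) ^ M := by
        apply intervalIntegral.integral_add
        · exact (Continuous.intervalIntegrable (by fun_prop) _ _)
        · exact (Continuous.intervalIntegrable (by fun_prop) _ _)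
    _ = ((t + a2) ^ (M + 1) - (t - a2) ^ (M + 1)) /
          ((M + 1) * 2 ^ (M + 1) * a1 ^ (M + 1) * a2) := by
        have hodd : ∫ s in (-e)..e, (a1*s) ^ M = 0 := by
          simp only [mul_pow]
          rw [intervalIntegral.integral_const_mul, integral_pow, (hM.add_one).neg_pow]
          simp
        rw [hodd, add_zero]
        rw [intervalIntegral.integral_comp_sub_mul (fun x => x ^ M) (ne_of_gt h2) (t*e),
          integral_pow]
        rw [show t*e - a2 * e = (t - a2) * e by ring, show t*e - a2 * (-e) = (t + a2) * e by ring,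
          mul_pow, mul_pow, hedef, div_pow, smul_eq_mul]
        rw [one_pow]
        have h2a1 : ((2*a1) ^ (M+1) : ℝ) ≠ 0 := by positivity
        rw [show ((M:ℝ)+1) * 2 ^ (M+1) * a1 ^ (M+1) * a2 = ((M:ℝ)+1) * (2*a1)^(M+1) * a2 by rw [mul_pow]; ring]
        field_simp [h2.ne', hM1, h2a1]
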